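/- Let W: [0,∞) → ℝ be continuously differentiable on (0,∞) and continuous at 0 with W(0) = 0, extended by 0 on (−∞,0), and let f: ℝ → ℝ be continuously differentiable. Then the function x ↦ Θ_f(x; A) := ∫_A^x W(x − y) f(y) dy is continuously differentiable on (A, ∞) with derivative Θ_f'(x; A) = f(A) W(x − A) + ∫_A^x f'(y) W(x − y) dy, and Θ_f'(x; A) → 0 as x ↓ A. -/

import Mathlib

set_option maxHeartbeats 1000000


open MeasureTheory Set Filter intervalIntegral

/-- Continuous differentiability of `x ↦ Θ_f(x;A)` on `(A,∞)` with derivative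
`f(A)W(x−A) + ∫_A^x f'(y)W(x−y)dy`, tending to `0` as `x ↓ A`. -/
theorem theta_derivative (W : ℝ → ℝ)
    (hW1 : ContDiffOn ℝ 1 W (Set.Ioi 0))
    (hWc : ContinuousAt W 0) (hWz : ∀ y : ℝ, y ≤ 0 → W y = 0)
    (f : ℝ → ℝ) (hf : ContDiff ℝ 1 f) (A : ℝ)
    (Θ' : ℝ → ℝ)
    (hΘ' : ∀ x : ℝ, Θ' x = f A * W (x - A) + ∫ y in A..x, deriv f y * W (x - y)) :
    (∀ x ∈ Set.Ioi A, HasDerivAt (fun x => ∫ y in A..x, W (x - y) * f y) (Θ' x) x)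
    ∧ ContinuousOn Θ' (Set.Ioi A)
    ∧ Tendsto Θ' (nhdsWithin A (Set.Ioi A)) (nhds 0) := by
  -- W is continuous on all of ℝ
  have hWcont : Continuous W := by
    rw [continuous_iff_continuousAt]
    intro x
    rcases lt_trichotomy x 0 with hx | rfl | hx
    · have h0 : ∀ᶠ y in nhds x, (0 : ℝ) = W y := by
        filter_upwards [Iio_mem_nhds hx] with y hy using (hWz y (le_of_lt hy)).symm
      exact ContinuousAt.congr continuousAt_const h0
    · exact hWc
    · exact (hW1.continuousOn.continuousAt (Ioi_mem_nhds hx))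
  have hfd : Continuous (deriv f) := hf.continuous_deriv le_rfl
  -- the antiderivative V of W
  set V : ℝ → ℝ := fun s => ∫ u in (0:ℝ)..s, W u with hVdef
  have hV : ∀ s, HasDerivAt V (W s) s := fun s =>
    (hWcont.integral_hasStrictDerivAt 0 s).hasDerivAt
  have hVcont : Continuous V := by
    rw [continuous_iff_continuousAt]; exact fun s => (hV s).continuousAt
  have hVz : ∀ s : ℝ, s ≤ 0 → V s = 0 := by
    intro s hs
    have h0 : Set.EqOn W 0 (Set.uIcc 0 s) := by
      intro u hu
      rcases Set.mem_uIcc.mp hu with ⟨_, h2⟩ | ⟨_, h2⟩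
      · exact hWz u (h2.trans hs)
      · exact hWz u h2
    show (∫ u in (0:ℝ)..s, W u) = 0
    rw [intervalIntegral.integral_congr h0]
    simp
  clear_value V
  -- Integration by parts identity
  have key : ∀ x : ℝ, (∫ y in A..x, W (x - y) * f y)
      = f A * V (x - A) + ∫ y in A..x, deriv f y * V (x - y) := by
    intro x
    have hu : ∀ y ∈ Set.uIcc A x, HasDerivAt f (deriv f y) y :=
      fun y _ => (hf.differentiable one_ne_zero y).hasDerivAt
    have hv : ∀ y ∈ Set.uIcc A x, HasDerivAt (fun y => -V (x - y)) (W (x - y)) y := by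
      intro y _
      have h1 : HasDerivAt (fun y : ℝ => x - y) (-1) y := (hasDerivAt_id y).const_sub x
      have h2 : HasDerivAt (fun y => -V (x - y)) (-(W (x - y) * -1)) y :=
        ((hV (x - y)).comp y h1).neg
      rw [show W (x - y) = -(W (x - y) * -1) by ring]
      exact h2
    have hWint : IntervalIntegrable (fun y => W (x - y)) volume A x :=
      (hWcont.comp (continuous_const.sub continuous_id)).intervalIntegrable A x
    have ibp := intervalIntegral.integral_mul_deriv_eq_deriv_mul hu hv
      (hfd.intervalIntegrable A x) hWint
    have hV0 : V (x - x) = 0 := by rw [sub_self]; exact hVz 0 le_rfl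
    rw [hV0] at ibp
    have hcomm : (∫ y in A..x, W (x - y) * f y) = ∫ y in A..x, f y * W (x - y) :=
      intervalIntegral.integral_congr fun y _ => mul_comm _ _
    rw [hcomm, ibp]
    simp only [mul_neg, intervalIntegral.integral_neg, mul_zero, neg_zero, sub_neg_eq_add,
      zero_sub, neg_neg]
    ring
  -- extension of the integral beyond the upper endpoint, for kernels vanishing on (-∞,0]
  have ext : ∀ (g : ℝ → ℝ), Continuous g → (∀ z : ℝ, z ≤ 0 → g z = 0) → ∀ x B : ℝ, x ≤ B →
      (∫ y in A..x, deriv f y * g (x - y)) = ∫ y in A..B, deriv f y * g (x - y) := by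
    intro g hg hgz x B hxB
    have hcont : Continuous (fun y => deriv f y * g (x - y)) :=
      hfd.mul (hg.comp (continuous_const.sub continuous_id))
    have h2 : (∫ y in x..B, deriv f y * g (x - y)) = 0 := by
      have h0 : Set.EqOn (fun y => deriv f y * g (x - y)) 0 (Set.uIcc x B) := by
        intro y hy
        have hxy : x ≤ y := by
          rcases Set.mem_uIcc.mp hy with ⟨h1, _⟩ | ⟨_, h2⟩
          · exact h1
          · linarith
        show deriv f y * g (x - y) = 0
        rw [hgz (x - y) (by linarith), mul_zero]
      rw [intervalIntegral.integral_congr h0]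
      simp
    rw [← intervalIntegral.integral_add_adjacent_intervals
      (hcont.intervalIntegrable A x) (hcont.intervalIntegrable x B), h2, add_zero]
  constructor
  · -- differentiability on (A, ∞)
    intro x₀ hx₀
    have hx₀' : A < x₀ := hx₀
    set B : ℝ := x₀ + 1 with hB
    -- bound for W on a compact set
    obtain ⟨M, hM⟩ : ∃ M : ℝ, ∀ z ∈ Set.Icc (x₀ - 1 - B) (x₀ + 1 - A), ‖W z‖ ≤ M :=
      isCompact_Icc.exists_bound_of_continuousOn hWcont.continuousOn
    -- derivative of the extended integral via differentiation under the integral sign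
    have hG : HasDerivAt (fun x => ∫ y in A..B, deriv f y * V (x - y))
        (∫ y in A..B, deriv f y * W (x₀ - y)) x₀ := by
      have hmeas : ∀ᶠ x in nhds x₀, AEStronglyMeasurable
          (fun t => deriv f t * V (x - t)) (volume.restrict (Set.uIoc A B)) := by
        filter_upwards with x
        exact (hfd.mul (hVcont.comp (continuous_const.sub continuous_id))).aestronglyMeasurable
      have hint : IntervalIntegrable (fun t => deriv f t * V (x₀ - t)) volume A B :=
        (hfd.mul (hVcont.comp (continuous_const.sub continuous_id))).intervalIntegrable A B
      have hmeas' : AEStronglyMeasurable (fun t => deriv f t * W (x₀ - t))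
          (volume.restrict (Set.uIoc A B)) :=
        (hfd.mul (hWcont.comp (continuous_const.sub continuous_id))).aestronglyMeasurable
      have hbound : ∀ᵐ t ∂volume, t ∈ Set.uIoc A B → ∀ x ∈ Metric.ball x₀ 1,
          ‖deriv f t * W (x - t)‖ ≤ ‖deriv f t‖ * M := by
        filter_upwards with t ht x hx
        rw [Set.uIoc_of_le (by linarith : A ≤ B)] at ht
        rw [Real.ball_eq_Ioo] at hx
        have h1 : x₀ - 1 - B ≤ x - t := by
          have := ht.2; have := hx.1; linarith
        have h2 : x - t ≤ x₀ + 1 - A := by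
          have := ht.1; have := hx.2; linarith
        rw [norm_mul]
        exact mul_le_mul_of_nonneg_left (hM _ ⟨h1, h2⟩) (norm_nonneg _)
      have hbint : IntervalIntegrable (fun t => ‖deriv f t‖ * M) volume A B :=
        (hfd.norm.mul continuous_const).intervalIntegrable A B
      have hdiff : ∀ᵐ t ∂volume, t ∈ Set.uIoc A B → ∀ x ∈ Metric.ball x₀ 1,
          HasDerivAt (fun x => deriv f t * V (x - t)) (deriv f t * W (x - t)) x := by
        filter_upwards with t ht x hx
        have h1 : HasDerivAt (fun x : ℝ => x - t) 1 x := (hasDerivAt_id x).sub_const t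
        have h2 := ((hV (x - t)).comp x h1).const_mul (deriv f t)
        simpa using h2
      exact (intervalIntegral.hasDerivAt_integral_of_dominated_loc_of_deriv_le
        (Metric.ball_mem_nhds x₀ one_pos) hmeas hint hmeas' hbound hbint hdiff).2
    -- derivative of the boundary term
    have hb : HasDerivAt (fun x => f A * V (x - A)) (f A * W (x₀ - A)) x₀ := by
      have h1 : HasDerivAt (fun x : ℝ => x - A) 1 x₀ := (hasDerivAt_id x₀).sub_const A
      have h2 := ((hV (x₀ - A)).comp x₀ h1).const_mul (f A)
      simpa using h2
    have hsum := hb.add hG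
    have hEq : (fun x => f A * V (x - A) + ∫ y in A..B, deriv f y * V (x - y))
        =ᶠ[nhds x₀] (fun x => ∫ y in A..x, W (x - y) * f y) := by
      filter_upwards [Iio_mem_nhds (by linarith : x₀ < B)] with x hx
      rw [key x, ext V hVcont hVz x B (le_of_lt hx)]
    have hres := hsum.congr_of_eventuallyEq hEq.symm
    have hval : Θ' x₀ = f A * W (x₀ - A) + ∫ y in A..B, deriv f y * W (x₀ - y) := by
      rw [hΘ' x₀, ext W hWcont hWz x₀ B (by linarith)]
    rw [hval]
    exact hres
  · -- continuity and limit
    have hΘcont : Continuous Θ' := by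
      have h1 : Continuous fun x => f A * W (x - A) :=
        continuous_const.mul (hWcont.comp (continuous_id.sub continuous_const))
      have h2 : Continuous fun x => ∫ y in A..x, deriv f y * W (x - y) := by
        have huc : Continuous (Function.uncurry fun (x y : ℝ) => deriv f y * W (x - y)) :=
          (hfd.comp continuous_snd).mul (hWcont.comp (continuous_fst.sub continuous_snd))
        exact intervalIntegral.continuous_parametric_intervalIntegral_of_continuous
          (μ := volume) huc continuous_id
      have heq : Θ' = fun x => f A * W (x - A) + ∫ y in A..x, deriv f y * W (x - y) :=
        funext hΘ'
      rw [heq]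
      exact h1.add h2
    refine ⟨hΘcont.continuousOn, ?_⟩
    have hΘA : Θ' A = 0 := by
      rw [hΘ' A, sub_self, hWz 0 le_rfl, intervalIntegral.integral_same, mul_zero, add_zero]
    have := (hΘcont.tendsto A).mono_left (nhdsWithin_le_nhds (s := Set.Ioi A))
    rwa [hΘA] at this
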